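/- Let q be a prime power, F a finite field with q² elements, and δ a generator of F^×. Let i, j ∈ ZMod (q²-1) with i ≢ j (mod q-1). Then δ^{k(i,j)} + δ^{l(i,j)} = δ^i + δ^j in F. -/

import Mathlib

/-- The canonical reduction ring homomorphism `ZMod (q²-1) → ZMod (q-1)`,
which exists since `(q-1) ∣ (q²-1)`. -/
def red (q : ℕ) : ZMod (q ^ 2 - 1) →+* ZMod (q - 1) :=
  ZMod.castHom (by simpa using Nat.sub_dvd_pow_sub_pow q 1 2) (ZMod (q - 1))

theorem stmt7 (q : ℕ) (hq : IsPrimePow q) (F : Type*) [Field F] [Fintype F]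
    (hF : Fintype.card F = q ^ 2) (δ : Fˣ) (hδ : Subgroup.zpowers δ = ⊤)
    (i j : ZMod (q ^ 2 - 1)) (hij : red q i ≠ red q j)
    (x : ZMod (q ^ 2 - 1))
    (hx : ((δ ^ x.val : Fˣ) : F) = 1 + ((δ ^ (j - i).val : Fˣ) : F))
    (y k l : ZMod (q ^ 2 - 1)) (hy : y = x + i - j)
    (hk : k = j - y * ((q - 1 : ℕ) : ZMod (q ^ 2 - 1)))
    (hl : l = i - x * ((q - 1 : ℕ) : ZMod (q ^ 2 - 1))) :
    ((δ ^ k.val : Fˣ) : F) + ((δ ^ l.val : Fˣ) : F) =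
      ((δ ^ i.val : Fˣ) : F) + ((δ ^ j.val : Fˣ) : F) := by
  have hq2 : 2 ≤ q := hq.two_le
  have hq4 : 4 ≤ q ^ 2 := by nlinarith
  haveI : NeZero (q ^ 2 - 1) := ⟨by omega⟩
  -- order of δ
  have horder : orderOf δ = q ^ 2 - 1 := by
    rw [orderOf_eq_card_of_forall_mem_zpowers (fun x => hδ ▸ Subgroup.mem_top x),
      Nat.card_units, Nat.card_eq_fintype_card, hF]
  have hmul : ∀ a b : ZMod (q ^ 2 - 1), δ ^ (a + b).val = δ ^ a.val * δ ^ b.val := by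
    intro a b
    have h := pow_mod_orderOf δ (a.val + b.val)
    rw [horder] at h
    rw [ZMod.val_add, h, pow_add]
  have hpowmul : ∀ a b : ZMod (q ^ 2 - 1), δ ^ (a * b).val = (δ ^ a.val) ^ b.val := by
    intro a b
    have h := pow_mod_orderOf δ (a.val * b.val)
    rw [horder] at h
    rw [ZMod.val_mul, h, pow_mul]
  have hc : ((q - 1 : ℕ) : ZMod (q ^ 2 - 1)).val = q - 1 := by
    have : q < q ^ 2 := by nlinarith
    apply ZMod.val_natCast_of_lt; omega
  -- characteristic / Frobenius
  obtain ⟨p, m, hp, hm, hpm⟩ := hq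
  have hp' : p.Prime := hp.nat_prime
  haveI : Fact p.Prime := ⟨hp'⟩
  have hrp : (ringChar F).Prime := CharP.char_is_prime F _
  obtain ⟨n', _, hcard⟩ := FiniteField.card F (ringChar F)
  have hpr : p = ringChar F := by
    have hdvd : p ∣ ringChar F ^ (n' : ℕ) := by
      rw [← hcard, hF, ← hpm]
      exact dvd_pow (dvd_pow_self p hm.ne') (by norm_num)
    exact ((Nat.prime_dvd_prime_iff_eq hp' hrp).mp (hp'.dvd_of_dvd_pow hdvd))
  haveI : CharP F p := hpr ▸ ringChar.charP F
  have hFrob : ∀ a b : F, (a + b) ^ q = a ^ q + b ^ q := by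
    intro a b
    rw [← hpm]
    exact add_pow_char_pow a b p m
  -- abbreviations
  set Di : F := ((δ ^ i.val : Fˣ) : F) with hDi
  set Dj : F := ((δ ^ j.val : Fˣ) : F) with hDj
  set Dk : F := ((δ ^ k.val : Fˣ) : F) with hDk
  set Dl : F := ((δ ^ l.val : Fˣ) : F) with hDl
  set A : F := ((δ ^ (j - i).val : Fˣ) : F) with hA'
  set B : F := ((δ ^ y.val : Fˣ) : F) with hB'
  have hq1 : q - 1 + 1 = q := by omega
  -- unit-level relations, coerced to F
  have hA : Di * A = Dj := by
    rw [hDi, hA', hDj, ← Units.val_mul, ← hmul]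
    norm_num
  have hBA : B * A = 1 + A := by
    rw [hB', hA', ← hx, ← Units.val_mul, ← hmul, hy]
    norm_num
  have hL : Dl * (1 + A) ^ (q - 1) = Di := by
    rw [← hx, hDl, hDi, ← Units.val_pow_eq_pow_val, ← Units.val_mul, ← hc, ← hpowmul, ← hmul, hl]
    norm_num
  have hK : Dk * B ^ (q - 1) = Dj := by
    rw [hB', hDk, hDj, ← Units.val_pow_eq_pow_val, ← Units.val_mul, ← hc, ← hpowmul, ← hmul, hk]
    norm_num
  have hne : (1 + A : F) ≠ 0 := by rw [← hx]; exact Units.ne_zero _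
  -- Frobenius consequences
  have h5 : (B ^ (q - 1) * B) * (A ^ (q - 1) * A) = (1 + A) ^ (q - 1) * (1 + A) := by
    rw [← pow_succ, ← pow_succ, ← pow_succ, hq1, ← mul_pow, hBA]
  have h6 : (1 + A) ^ (q - 1) * (1 + A) = 1 + A ^ (q - 1) * A := by
    rw [← pow_succ, ← pow_succ, hq1, hFrob, one_pow]
  -- main computation
  apply mul_right_cancel₀ (b := (1 + A) ^ (q - 1) * (1 + A)) (by
    exact mul_ne_zero (pow_ne_zero _ hne) hne)
  linear_combination (-Dk) * h5 + (B * A ^ (q - 1) * A) * hK + (Dj * A ^ (q - 1)) * hBA +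
    (1 - A ^ (q - 1)) * hA + (1 + A) * hL - (Di + Dj) * h6
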